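/- Define s0(n) as above. For every n ≥ 5, s0(n) ≥ s0(n−1) + s0(n−4), with equality if and only if n ≡ 1 (mod 3). -/

import Mathlib

def s0 : ℕ → ℕ
  | 0 => 1
  | 1 => 1
  | 2 => 2
  | n =>
    if n % 3 = 0 then 3 * 3 ^ (n / 3 - 1)
    else if n % 3 = 1 then 4 * 3 ^ (n / 3 - 1)
    else 6 * 3 ^ (n / 3 - 1)

lemma s0a (m : ℕ) : s0 (3*m+3) = 3 * 3 ^ m := by simp [s0]
lemma s0b (m : ℕ) : s0 (3*m+4) = 4 * 3 ^ m := by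
  have : (3*m+4) % 3 = 1 := by omega
  have h2 : (3*m+4) / 3 = m + 1 := by omega
  simp [s0, this, h2]
lemma s0c (m : ℕ) : s0 (3*m+5) = 6 * 3 ^ m := by
  have h1 : (3*m+5) % 3 = 2 := by omega
  have h2 : (3*m+5) / 3 = m + 1 := by omega
  simp [s0, h1, h2]

theorem s0_one_four_step (n : ℕ) (hn : 5 ≤ n) :
    s0 (n - 1) + s0 (n - 4) ≤ s0 n ∧
      (s0 n = s0 (n - 1) + s0 (n - 4) ↔ n % 3 = 1) := by
  have hp : ∀ m : ℕ, (0:ℕ) < 3 ^ m := fun m => Nat.pow_pos (by norm_num)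
  obtain ⟨k, hk | hk | hk⟩ : ∃ k, n = 3*k ∨ n = 3*k+1 ∨ n = 3*k+2 := ⟨n/3, by omega⟩
  · -- n = 3k, k ≥ 2
    have hk2 : 2 ≤ k := by omega
    rcases eq_or_lt_of_le hk2 with h | h
    · subst hk; rw [← h]; norm_num [s0]
    · obtain ⟨m, rfl⟩ : ∃ m, k = m + 3 := ⟨k - 3, by omega⟩
      have e1 : n = 3*(m+2)+3 := by omega
      have e2 : n - 1 = 3*m+5+3 := by omega
      have e3 : n - 4 = 3*m+5 := by omega
      have e2' : (3*m+5+3 : ℕ) = 3*(m+1)+5 := by ring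
      rw [e2, e3, e1, e2', s0a, s0c, s0c]
      have := hp m
      constructor
      · nlinarith [pow_succ 3 m, pow_succ 3 (m+1)]
      · constructor
        · intro he; exfalso; nlinarith [pow_succ 3 m, pow_succ 3 (m+1)]
        · intro he; omega
  · -- n = 3k+1, k ≥ 2
    obtain ⟨m, rfl⟩ : ∃ m, k = m + 2 := ⟨k - 2, by omega⟩
    have e1 : n = 3*(m+1)+4 := by omega
    have e2 : n - 1 = 3*(m+1)+3 := by omega
    have e3 : n - 4 = 3*m+3 := by omega
    rw [e2, e3, e1, s0b, s0a, s0a]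
    constructor
    · nlinarith [pow_succ 3 m]
    · constructor
      · intro _; omega
      · intro _; nlinarith [pow_succ 3 m]
  · -- n = 3k+2, k ≥ 1
    have hk1 : 1 ≤ k := by omega
    rcases eq_or_lt_of_le hk1 with h | h
    · subst hk; rw [← h]; norm_num [s0]
    · obtain ⟨m, rfl⟩ : ∃ m, k = m + 2 := ⟨k - 2, by omega⟩
      have e1 : n = 3*(m+1)+5 := by omega
      have e2 : n - 1 = 3*(m+1)+4 := by omega
      have e3 : n - 4 = 3*m+4 := by omega
      rw [e2, e3, e1, s0c, s0b, s0b]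
      have := hp m
      constructor
      · nlinarith [pow_succ 3 m]
      · constructor
        · intro he; exfalso; nlinarith [pow_succ 3 m]
        · intro he; omega
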